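/- Let A be a real symmetric d×d matrix with μI ⪯ A ⪯ LI for some 0 < μ ≤ L, let α ≥ 0, K ≥ 1, and suppose 0 ≤ γ < 1/(K·L + α). Let Q := (I − γ(A + αI))^{K−1} (the distortion matrix with MAML-style weights θ_K = 1 and θ_k = 0 for k < K). Then ψ(μ, α, γ, K) · I ⪯ Q A ⪯ ψ(L, α, γ, K) · I, where ψ(λ, α, γ, K) := (1 − γ(λ + α))^{K−1} λ. In particular every eigenvalue χ of QA satisfies ψ(μ, α, γ, K) ≤ χ ≤ ψ(L, α, γ, K), and the ratio ψ(L, α, γ, K)/ψ(μ, α, γ, K) equals ((1 − γ(L + α))/(1 − γ(μ + α)))^{K−1} · (L/μ). -/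

import Mathlib

open Matrix Finset

/-- `ψ(λ, α, γ, K) = (1 - γ(λ + α))^(K-1) λ`. -/
noncomputable def psi (lam α γ : ℝ) (K : ℕ) : ℝ :=
  (1 - γ * (lam + α)) ^ (K - 1) * lam

lemma psi_le_psi (α γ L : ℝ) (hγ0 : 0 ≤ γ) (K : ℕ) (hK : 1 ≤ K)
    (h1 : γ * ((K : ℝ) * L + α) < 1) (a b : ℝ) (ha : 0 ≤ a) (hab : a ≤ b) (hbL : b ≤ L) :
    psi a α γ K ≤ psi b α γ K := by
  obtain ⟨n, rfl⟩ : ∃ n, K = n + 1 := ⟨K - 1, by omega⟩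
  simp only [psi, Nat.add_sub_cancel]
  have hb0 : 0 ≤ b := ha.trans hab
  have hL0 : 0 ≤ L := hb0.trans hbL
  have hKcast : (1 : ℝ) ≤ (n : ℝ) + 1 := by
    have : (0:ℝ) ≤ (n:ℝ) := Nat.cast_nonneg n
    linarith
  have hKL : L ≤ ((n : ℝ) + 1) * L := le_mul_of_one_le_left hL0 hKcast
  have hcast : ((n + 1 : ℕ) : ℝ) = (n : ℝ) + 1 := by push_cast; ring
  rw [hcast] at h1
  set ta := 1 - γ * (a + α) with hta
  set tb := 1 - γ * (b + α) with htb
  have htb0 : 0 < tb := by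
    have : γ * (b + α) ≤ γ * (((n : ℝ) + 1) * L + α) := by
      apply mul_le_mul_of_nonneg_left _ hγ0
      linarith [hbL.trans hKL]
    simp only [htb]; linarith
  have hta0 : 0 < ta := by
    have : tb ≤ ta := by simp only [hta, htb]; nlinarith
    linarith
  have htatb : tb ≤ ta := by simp only [hta, htb]; nlinarith
  rcases Nat.eq_zero_or_pos n with rfl | hn
  · simpa using hab
  set S := ∑ i ∈ range n, ta ^ i * tb ^ (n - 1 - i) with hS
  have hgeom : ta ^ n - tb ^ n = S * (ta - tb) := (geom_sum₂_mul ta tb n).symm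
  have hSbound : S ≤ (n : ℝ) * ta ^ (n - 1) := by
    rw [hS]
    calc ∑ i ∈ range n, ta ^ i * tb ^ (n - 1 - i)
        ≤ ∑ i ∈ range n, ta ^ (n - 1) := by
          apply Finset.sum_le_sum
          intro i hi
          have hin : i + (n - 1 - i) = n - 1 := by
            simp only [Finset.mem_range] at hi; omega
          calc ta ^ i * tb ^ (n - 1 - i) ≤ ta ^ i * ta ^ (n - 1 - i) := by
                apply mul_le_mul_of_nonneg_left _ (pow_nonneg hta0.le i)
                exact pow_le_pow_left₀ htb0.le htatb _
            _ = ta ^ (n - 1) := by rw [← pow_add, hin]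
      _ = (n : ℝ) * ta ^ (n - 1) := by rw [Finset.sum_const, card_range, nsmul_eq_mul]
  have hSnonneg : 0 ≤ S := by
    apply Finset.sum_nonneg
    intro i _
    exact mul_nonneg (pow_nonneg hta0.le _) (pow_nonneg htb0.le _)
  have hbn : γ * b * (n : ℝ) ≤ ta := by
    have : γ * ((n : ℝ) * b + (a + α)) ≤ γ * (((n : ℝ) + 1) * L + α) := by
      apply mul_le_mul_of_nonneg_left _ hγ0
      have hnb : (n : ℝ) * b ≤ (n : ℝ) * L := by
        apply mul_le_mul_of_nonneg_left hbL (by positivity)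
      nlinarith
    simp only [hta]; nlinarith
  have hpw : ta ^ n = ta * ta ^ (n - 1) := by
    rw [← pow_succ']; congr 1; omega
  have hkey : γ * b * S ≤ ta ^ n := by
    calc γ * b * S ≤ γ * b * ((n : ℝ) * ta ^ (n - 1)) := by
          apply mul_le_mul_of_nonneg_left hSbound (by positivity)
      _ = (γ * b * (n : ℝ)) * ta ^ (n - 1) := by ring
      _ ≤ ta * ta ^ (n - 1) := by
          apply mul_le_mul_of_nonneg_right hbn (pow_nonneg hta0.le _)
      _ = ta ^ n := hpw.symm
  have htateq : ta - tb = γ * (b - a) := by simp only [hta, htb]; ring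
  rw [htateq] at hgeom
  nlinarith [mul_nonneg (sub_nonneg.2 hab) (sub_nonneg.2 hkey)]

lemma spec_lb {d : ℕ} {M : Matrix (Fin d) (Fin d) ℝ} {c : ℝ}
    (h : (M - c • 1).PosSemidef) {χ : ℝ} (hχ : χ ∈ spectrum ℝ M) : c ≤ χ := by
  rw [spectrum.mem_iff] at hχ
  have hdet : ((algebraMap ℝ (Matrix (Fin d) (Fin d) ℝ)) χ - M).det = 0 := by
    by_contra hne
    exact hχ ((Matrix.isUnit_iff_isUnit_det _).2 (isUnit_iff_ne_zero.2 hne))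
  obtain ⟨v, hv0, hv⟩ := (Matrix.exists_mulVec_eq_zero_iff).2 hdet
  have hMv : M *ᵥ v = χ • v := by
    have : (χ • (1 : Matrix (Fin d) (Fin d) ℝ) - M) *ᵥ v = 0 := by
      rwa [Algebra.algebraMap_eq_smul_one] at hv
    rw [Matrix.sub_mulVec, Matrix.smul_mulVec, Matrix.one_mulVec, sub_eq_zero] at this
    exact this.symm
  have h2 := h.dotProduct_mulVec_nonneg v
  have hcalc : (M - c • 1) *ᵥ v = (χ - c) • v := by
    rw [Matrix.sub_mulVec, Matrix.smul_mulVec, Matrix.one_mulVec, hMv, sub_smul]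
  rw [hcalc] at h2
  have hvv : 0 < v ⬝ᵥ v := by
    rcases lt_or_eq_of_le (dotProduct_star_self_nonneg v) with hp | hz
    · simpa using hp
    · exact absurd (dotProduct_star_self_eq_zero.mp hz.symm) hv0
  have h3 : 0 ≤ (χ - c) * (v ⬝ᵥ v) := by
    simpa [dotProduct_smul, star_trivial, smul_eq_mul] using h2
  nlinarith

lemma spec_ub {d : ℕ} {M : Matrix (Fin d) (Fin d) ℝ} {c : ℝ}
    (h : (c • 1 - M).PosSemidef) {χ : ℝ} (hχ : χ ∈ spectrum ℝ M) : χ ≤ c := by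
  rw [spectrum.mem_iff] at hχ
  have hdet : ((algebraMap ℝ (Matrix (Fin d) (Fin d) ℝ)) χ - M).det = 0 := by
    by_contra hne
    exact hχ ((Matrix.isUnit_iff_isUnit_det _).2 (isUnit_iff_ne_zero.2 hne))
  obtain ⟨v, hv0, hv⟩ := (Matrix.exists_mulVec_eq_zero_iff).2 hdet
  have hMv : M *ᵥ v = χ • v := by
    have : (χ • (1 : Matrix (Fin d) (Fin d) ℝ) - M) *ᵥ v = 0 := by
      rwa [Algebra.algebraMap_eq_smul_one] at hv
    rw [Matrix.sub_mulVec, Matrix.smul_mulVec, Matrix.one_mulVec, sub_eq_zero] at this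
    exact this.symm
  have h2 := h.dotProduct_mulVec_nonneg v
  have hcalc : (c • 1 - M) *ᵥ v = (c - χ) • v := by
    rw [Matrix.sub_mulVec, Matrix.smul_mulVec, Matrix.one_mulVec, hMv, sub_smul]
  rw [hcalc] at h2
  have hvv : 0 < v ⬝ᵥ v := by
    rcases lt_or_eq_of_le (dotProduct_star_self_nonneg v) with hp | hz
    · simpa using hp
    · exact absurd (dotProduct_star_self_eq_zero.mp hz.symm) hv0
  have h3 : 0 ≤ (c - χ) * (v ⬝ᵥ v) := by
    simpa [dotProduct_smul, star_trivial, smul_eq_mul] using h2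
  nlinarith

theorem stmt_8 (d : ℕ) (A : Matrix (Fin d) (Fin d) ℝ) (hA : A.IsSymm)
    (μ L : ℝ) (hμ : 0 < μ) (hμL : μ ≤ L)
    (hAlow : (A - μ • (1 : Matrix (Fin d) (Fin d) ℝ)).PosSemidef)
    (hAup : (L • (1 : Matrix (Fin d) (Fin d) ℝ) - A).PosSemidef)
    (α γ : ℝ) (hα : 0 ≤ α) (K : ℕ) (hK : 1 ≤ K)
    (hγ0 : 0 ≤ γ) (hγ : γ < 1 / (K * L + α))
    (Q : Matrix (Fin d) (Fin d) ℝ)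
    (hQ : Q = ((1 : Matrix (Fin d) (Fin d) ℝ) - γ • (A + α • 1)) ^ (K - 1)) :
    (Q * A - psi μ α γ K • (1 : Matrix (Fin d) (Fin d) ℝ)).PosSemidef ∧
    (psi L α γ K • (1 : Matrix (Fin d) (Fin d) ℝ) - Q * A).PosSemidef ∧
    (∀ χ ∈ spectrum ℝ (Q * A), psi μ α γ K ≤ χ ∧ χ ≤ psi L α γ K) ∧
    psi L α γ K / psi μ α γ K =
      ((1 - γ * (L + α)) / (1 - γ * (μ + α))) ^ (K - 1) * (L / μ) := by
  have hH : A.IsHermitian := by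
    rwa [Matrix.IsHermitian, Matrix.conjTranspose_eq_transpose_of_trivial]
  set U : Matrix (Fin d) (Fin d) ℝ := (hH.eigenvectorUnitary : Matrix (Fin d) (Fin d) ℝ) with hUdef
  have hU1 : U * star U = 1 := (Matrix.mem_unitaryGroup_iff).mp hH.eigenvectorUnitary.2
  have hU2 : star U * U = 1 := (Matrix.mem_unitaryGroup_iff').mp hH.eigenvectorUnitary.2
  set e := hH.eigenvalues with hedef
  have hspec : A = U * diagonal e * star U := by
    have := hH.spectral_theorem
    simpa [RCLike.ofReal_real_eq_id] using this
  have hdiag : ∀ f g : Fin d → ℝ, (U * diagonal f * star U) * (U * diagonal g * star U)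
      = U * diagonal (fun i => f i * g i) * star U := by
    intro f g
    calc (U * diagonal f * star U) * (U * diagonal g * star U)
        = U * diagonal f * (star U * U) * diagonal g * star U := by
          simp only [Matrix.mul_assoc]
      _ = U * diagonal (fun i => f i * g i) * star U := by
          rw [hU2, Matrix.mul_one, Matrix.mul_assoc U, Matrix.diagonal_mul_diagonal]
  have hsmul1 : ∀ c : ℝ, c • (1 : Matrix (Fin d) (Fin d) ℝ)
      = U * diagonal (fun _ => c) * star U := by
    intro c
    rw [Matrix.smul_one_eq_diagonal]
    calc (diagonal fun _ => c) = c • (U * star U) := by rw [hU1, Matrix.smul_one_eq_diagonal]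
      _ = U * (c • (1:Matrix (Fin d) (Fin d) ℝ)) * star U := by
          rw [Matrix.mul_smul, Matrix.mul_one, Matrix.smul_mul]
      _ = U * diagonal (fun _ => c) * star U := by rw [Matrix.smul_one_eq_diagonal]
  have hone : (1 : Matrix (Fin d) (Fin d) ℝ) = U * diagonal (fun _ => (1:ℝ)) * star U := by
    have := hsmul1 1
    rwa [one_smul] at this
  have hpow : ∀ (f : Fin d → ℝ) (n : ℕ), (U * diagonal f * star U) ^ n
      = U * diagonal (fun i => f i ^ n) * star U := by
    intro f n
    induction n with
    | zero =>
      have h0 : (fun i : Fin d => f i ^ 0) = fun _ => (1:ℝ) := by funext i; simp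
      rw [pow_zero, h0, ← hsmul1 1, one_smul]
    | succ n ih =>
      rw [pow_succ, ih, hdiag]
      have : (fun i : Fin d => f i ^ n * f i) = fun i => f i ^ (n+1) := by
        funext i; ring
      rw [this]
  have hadd : ∀ f g : Fin d → ℝ, (U * diagonal f * star U) + (U * diagonal g * star U)
      = U * diagonal (fun i => f i + g i) * star U := by
    intro f g
    rw [← Matrix.add_mul, ← Matrix.mul_add, ← Matrix.diagonal_add]
  have hsub : ∀ f g : Fin d → ℝ, (U * diagonal f * star U) - (U * diagonal g * star U)
      = U * diagonal (fun i => f i - g i) * star U := by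
    intro f g
    rw [← Matrix.sub_mul, ← Matrix.mul_sub, ← Matrix.diagonal_sub]
  have hsmulmat : ∀ (c : ℝ) (f : Fin d → ℝ), c • (U * diagonal f * star U)
      = U * diagonal (fun i => c * f i) * star U := by
    intro c f
    rw [← Matrix.smul_mul, ← Matrix.mul_smul, ← Matrix.diagonal_smul]
    rfl
  -- denominators
  have hKR : (1:ℝ) ≤ (K:ℝ) := by exact_mod_cast hK
  have hL0 : 0 < L := lt_of_lt_of_le hμ hμL
  have hden : 0 < (K:ℝ) * L + α := by nlinarith
  have hγ1 : γ * ((K:ℝ) * L + α) < 1 := by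
    rw [lt_div_iff₀ hden] at hγ
    linarith
  -- eigenvalue bounds
  have hconjback : ∀ f : Fin d → ℝ, star U * (U * diagonal f * star U) * U = diagonal f := by
    intro f
    calc star U * (U * diagonal f * star U) * U
        = (star U * U) * diagonal f * (star U * U) := by simp only [Matrix.mul_assoc]
      _ = diagonal f := by rw [hU2, Matrix.one_mul, Matrix.mul_one]
  have hAsubμ : A - μ • (1 : Matrix (Fin d) (Fin d) ℝ)
      = U * diagonal (fun i => e i - μ) * star U := by
    rw [hspec, hsmul1 μ, hsub]
  have hLsubA : L • (1 : Matrix (Fin d) (Fin d) ℝ) - A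
      = U * diagonal (fun i => L - e i) * star U := by
    rw [hspec, hsmul1 L, hsub]
  have helow : ∀ i, μ ≤ e i := by
    have h1 := hAlow.conjTranspose_mul_mul_same U
    rw [← Matrix.star_eq_conjTranspose, hAsubμ, hconjback] at h1
    intro i
    have := Matrix.posSemidef_diagonal_iff.mp h1 i
    linarith
  have hehigh : ∀ i, e i ≤ L := by
    have h1 := hAup.conjTranspose_mul_mul_same U
    rw [← Matrix.star_eq_conjTranspose, hLsubA, hconjback] at h1
    intro i
    have := Matrix.posSemidef_diagonal_iff.mp h1 i
    linarith
  -- Q * A diagonalized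
  have hQA : Q * A = U * diagonal (fun i => psi (e i) α γ K) * star U := by
    have hN : (1 : Matrix (Fin d) (Fin d) ℝ) - γ • (A + α • 1)
        = U * diagonal (fun i => 1 - γ * (e i + α)) * star U := by
      rw [hspec, hsmul1 α, hadd, hsmulmat, hone, hsub]
    rw [hQ, hN, hpow, hspec, hdiag]
    rfl
  have hpsilo : ∀ i, psi μ α γ K ≤ psi (e i) α γ K := fun i =>
    psi_le_psi α γ L hγ0 K hK hγ1 μ (e i) hμ.le (helow i) (hehigh i)
  have hpsihi : ∀ i, psi (e i) α γ K ≤ psi L α γ K := fun i =>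
    psi_le_psi α γ L hγ0 K hK hγ1 (e i) L (hμ.le.trans (helow i)) (hehigh i) le_rfl
  have part1 : (Q * A - psi μ α γ K • (1 : Matrix (Fin d) (Fin d) ℝ)).PosSemidef := by
    rw [hQA, hsmul1, hsub]
    have hps : (diagonal (fun i => psi (e i) α γ K - psi μ α γ K)).PosSemidef :=
      Matrix.posSemidef_diagonal_iff.mpr fun i => sub_nonneg.2 (hpsilo i)
    have := hps.mul_mul_conjTranspose_same U
    rwa [← Matrix.star_eq_conjTranspose] at this
  have part2 : (psi L α γ K • (1 : Matrix (Fin d) (Fin d) ℝ) - Q * A).PosSemidef := by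
    rw [hQA, hsmul1, hsub]
    have hps : (diagonal (fun i => psi L α γ K - psi (e i) α γ K)).PosSemidef :=
      Matrix.posSemidef_diagonal_iff.mpr fun i => sub_nonneg.2 (hpsihi i)
    have := hps.mul_mul_conjTranspose_same U
    rwa [← Matrix.star_eq_conjTranspose] at this
  refine ⟨part1, part2, fun χ hχ => ⟨spec_lb part1 hχ, spec_ub part2 hχ⟩, ?_⟩
  simp only [psi]
  rw [mul_div_mul_comm, ← div_pow]
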